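/- Let A be an algebra in a congruence modular variety with (C1), and suppose ζ is the center of A. If ξ ≥ ζ is a congruence on A such that ξ/ζ is central in Con(A/ζ), then ξ = ζ; in other words, A/ζ_A is centerless. -/

import Mathlib

/-- An algebraic signature: a type of operation symbols with finite arities. -/
structure Signature where
  ops : Type
  arity : ops → ℕ

/-- An algebra for a signature. -/
structure SAlgebra (S : Signature) where
  carrier : Type
  interp : (o : S.ops) → (Fin (S.arity o) → carrier) → carrier

namespace SAlgebra

variable {S : Signature}

/-- Binary product of algebras. -/
def prod (A B : SAlgebra S) : SAlgebra S where
  carrier := A.carrier × B.carrier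
  interp o x := (A.interp o fun i => (x i).1, B.interp o fun i => (x i).2)

/-- Product of a family of algebras. -/
def pi {ι : Type} (A : ι → SAlgebra S) : SAlgebra S where
  carrier := ∀ i, (A i).carrier
  interp o x i := (A i).interp o fun j => x j i

end SAlgebra

/-- Homomorphisms of algebras. -/
structure SHom {S : Signature} (A B : SAlgebra S) where
  toFun : A.carrier → B.carrier
  map : ∀ (o : S.ops) (x : Fin (S.arity o) → A.carrier),
    toFun (A.interp o x) = B.interp o fun i => toFun (x i)

namespace SHom

variable {S : Signature}

/-- Composition of homomorphisms. -/
def comp {A B C : SAlgebra S} (g : SHom B C) (f : SHom A B) : SHom A C where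
  toFun := g.toFun ∘ f.toFun
  map o x := by simp [Function.comp, f.map, g.map]

/-- The `i`-th projection of a product. -/
def proj {ι : Type} (A : ι → SAlgebra S) (i : ι) : SHom (SAlgebra.pi A) (A i) where
  toFun x := x i
  map _ _ := rfl

end SHom

/-- Congruences of an algebra. -/
structure SCon {S : Signature} (A : SAlgebra S) where
  r : A.carrier → A.carrier → Prop
  iseqv : Equivalence r
  compat : ∀ (o : S.ops) (x y : Fin (S.arity o) → A.carrier),
    (∀ i, r (x i) (y i)) → r (A.interp o x) (A.interp o y)

namespace SCon

variable {S : Signature} {A : SAlgebra S}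

instance : PartialOrder (SCon A) where
  le c d := ∀ x y, c.r x y → d.r x y
  le_refl _ _ _ h := h
  le_trans _ _ _ h h' x y hx := h' x y (h x y hx)
  le_antisymm a b h h' := by
    cases a; cases b
    have : ∀ x y : A.carrier, _ ↔ _ := fun x y => Iff.intro (h x y) (h' x y)
    simp only [SCon.mk.injEq]
    funext x y
    exact propext (this x y)

instance : InfSet (SCon A) :=
  ⟨fun s =>
    { r := fun x y => ∀ c ∈ s, c.r x y
      iseqv := ⟨fun x c _ => c.iseqv.refl x, fun h c hc => c.iseqv.symm (h c hc),
        fun h1 h2 c hc => c.iseqv.trans (h1 c hc) (h2 c hc)⟩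
      compat := fun o x y h c hc => c.compat o x y fun i => h i c hc }⟩

instance : CompleteLattice (SCon A) :=
  completeLatticeOfInf _ (fun s =>
    ⟨fun c hc x y h => h c hc, fun b hb x y h c hc => hb hc x y h⟩)

/-- Restriction (inverse image) of a congruence along a homomorphism. -/
def comap {B : SAlgebra S} (f : SHom A B) (θ : SCon B) : SCon A where
  r x y := θ.r (f.toFun x) (f.toFun y)
  iseqv := ⟨fun _ => θ.iseqv.refl _, θ.iseqv.symm, θ.iseqv.trans⟩
  compat o x y h := by
    show θ.r (f.toFun (A.interp o x)) (f.toFun (A.interp o y))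
    rw [f.map, f.map]
    exact θ.compat o _ _ h

/-- Product of two congruences. -/
def prodCon {A B : SAlgebra S} (φ : SCon A) (ψ : SCon B) : SCon (A.prod B) where
  r x y := φ.r x.1 y.1 ∧ ψ.r x.2 y.2
  iseqv := ⟨fun _ => ⟨φ.iseqv.refl _, ψ.iseqv.refl _⟩,
    fun h => ⟨φ.iseqv.symm h.1, ψ.iseqv.symm h.2⟩,
    fun h h' => ⟨φ.iseqv.trans h.1 h'.1, ψ.iseqv.trans h.2 h'.2⟩⟩
  compat o x y h := ⟨φ.compat o _ _ fun i => (h i).1, ψ.compat o _ _ fun i => (h i).2⟩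

/-- Product of a family of congruences. -/
def piCon {ι : Type} {A : ι → SAlgebra S} (φ : ∀ i, SCon (A i)) : SCon (SAlgebra.pi A) where
  r x y := ∀ i, (φ i).r (x i) (y i)
  iseqv := ⟨fun _ i => (φ i).iseqv.refl _, fun h i => (φ i).iseqv.symm (h i),
    fun h h' i => (φ i).iseqv.trans (h i) (h' i)⟩
  compat o x y h i := (φ i).compat o _ _ fun j => h j i

end SCon

/-- Terms in `n` variables over a signature. -/
inductive STerm (S : Signature) : ℕ → Type where
  | var : {n : ℕ} → Fin n → STerm S n
  | app : {n : ℕ} → (o : S.ops) → (Fin (S.arity o) → STerm S n) → STerm S n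

/-- Evaluation of a term in an algebra. -/
def STerm.eval {S : Signature} (A : SAlgebra S) {n : ℕ} : STerm S n → (Fin n → A.carrier) → A.carrier
  | .var i, x => x i
  | .app o t, x => A.interp o fun j => (t j).eval A x

/-- The term-condition centralizer relation `C(α, β; δ)`. -/
def Centralizes {S : Signature} (A : SAlgebra S) (α β δ : SCon A) : Prop :=
  ∀ (n m : ℕ) (t : STerm S (n + m)) (a b : Fin n → A.carrier) (u v : Fin m → A.carrier),
    (∀ i, α.r (a i) (b i)) → (∀ j, β.r (u j) (v j)) →
    δ.r (t.eval A (Fin.append a u)) (t.eval A (Fin.append a v)) →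
    δ.r (t.eval A (Fin.append b u)) (t.eval A (Fin.append b v))

/-- The commutator `[α, β]`: the least congruence `δ` with `C(α, β; δ)`. -/
def conCommutator {S : Signature} (A : SAlgebra S) (α β : SCon A) : SCon A :=
  sInf {δ | Centralizes A α β δ}

/-- The center of an algebra: the largest central congruence. -/
def conCenter {S : Signature} (A : SAlgebra S) : SCon A :=
  sSup {θ | conCommutator A θ ⊤ = ⊥}

/-- A class of algebras is a variety iff it is closed under subalgebras
(isomorphic copies included), homomorphic images and products. -/
def IsVariety {S : Signature} (V : SAlgebra S → Prop) : Prop :=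
  (∀ (A B : SAlgebra S) (e : SHom A B), Function.Injective e.toFun → V B → V A) ∧
  (∀ (A B : SAlgebra S) (p : SHom A B), Function.Surjective p.toFun → V A → V B) ∧
  (∀ (ι : Type) (A : ι → SAlgebra S), (∀ i, V (A i)) → V (SAlgebra.pi A))

/-- A congruence modular variety. -/
def IsCongruenceModularVariety {S : Signature} (V : SAlgebra S → Prop) : Prop :=
  IsVariety V ∧ ∀ A : SAlgebra S, V A → IsModularLattice (SCon A)

/-- A Gumm difference term for the class `V`:  `d(x,y,y) = x` holds identically,
and `d(x,x,y) = y` whenever `x θ y` for an abelian congruence `θ`. -/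
def IsGummDifferenceTerm {S : Signature} (V : SAlgebra S → Prop) (d : STerm S 3) : Prop :=
  (∀ A : SAlgebra S, V A → ∀ x y : A.carrier, d.eval A ![x, y, y] = x) ∧
  (∀ A : SAlgebra S, V A → ∀ θ : SCon A, conCommutator A θ θ = ⊥ →
    ∀ x y : A.carrier, θ.r x y → d.eval A ![x, x, y] = y)

/-- `R` is an absolute retract in `V`: every embedding of `R` into a member of `V`
admits a retraction. -/
def IsAbsoluteRetract {S : Signature} (V : SAlgebra S → Prop) (R : SAlgebra S) : Prop :=
  ∀ A : SAlgebra S, V A → ∀ e : SHom R A, Function.Injective e.toFun →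
    ∃ p : SHom A R, ∀ x, p.toFun (e.toFun x) = x

/-- An embedding is essential iff every congruence of the codomain restricting
trivially is trivial. -/
def IsEssential {S : Signature} {A B : SAlgebra S} (e : SHom A B) : Prop :=
  ∀ θ : SCon B, SCon.comap e θ = ⊥ → θ = ⊥

/-- A congruence `α` is dense: any congruence meeting it trivially is trivial. -/
def DenseCon {S : Signature} {A : SAlgebra S} (α : SCon A) : Prop :=
  ∀ θ : SCon A, θ ⊓ α = ⊥ → θ = ⊥

/-- The setoid underlying a congruence. -/
def SCon.setoid {S : Signature} {A : SAlgebra S} (θ : SCon A) : Setoid A.carrier :=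
  ⟨θ.r, θ.iseqv⟩

/-- Quotient algebra. -/
noncomputable def SAlgebra.quot {S : Signature} (A : SAlgebra S) (θ : SCon A) : SAlgebra S where
  carrier := Quotient θ.setoid
  interp o x := Quotient.mk θ.setoid (A.interp o fun i => (x i).out)

theorem SCon.out_rel {S : Signature} {A : SAlgebra S} (θ : SCon A) (a : A.carrier) :
    θ.r (Quotient.out (Quotient.mk θ.setoid a)) a :=
  @Quotient.exact _ θ.setoid _ _ (Quotient.out_eq _)

/-- The canonical quotient homomorphism. -/
def SHom.quotHom {S : Signature} (A : SAlgebra S) (θ : SCon A) : SHom A (A.quot θ) where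
  toFun := Quotient.mk θ.setoid
  map o x := Quotient.sound (θ.compat o _ _ fun i => θ.iseqv.symm (θ.out_rel (x i)))

/-- Product map of a family of homomorphisms. -/
def SHom.piMap {S : Signature} {ι : Type} {A B : ι → SAlgebra S} (f : ∀ i, SHom (A i) (B i)) :
    SHom (SAlgebra.pi A) (SAlgebra.pi B) where
  toFun x i := (f i).toFun (x i)
  map o x := funext fun i => (f i).map o fun j => x j i

/-- The congruence `φ/θ` on the quotient `A/θ`, for `θ ≤ φ`. -/
def SCon.quotCon {S : Signature} {A : SAlgebra S} (θ φ : SCon A) (h : θ ≤ φ) :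
    SCon (A.quot θ) where
  r a b := φ.r a.out b.out
  iseqv := ⟨fun _ => φ.iseqv.refl _, φ.iseqv.symm, φ.iseqv.trans⟩
  compat o x y hxy := by
    have hx := h _ _ (θ.out_rel (A.interp o fun i => (x i).out))
    have hy := h _ _ (θ.out_rel (A.interp o fun i => (y i).out))
    exact φ.iseqv.trans hx (φ.iseqv.trans (φ.compat o _ _ hxy) (φ.iseqv.symm hy))

/-- Finitely subdirectly irreducible: `⊥` is meet irreducible in the congruence lattice. -/
def IsFSI {S : Signature} (A : SAlgebra S) : Prop :=
  ∀ θ φ : SCon A, θ ⊓ φ = ⊥ → θ = ⊥ ∨ φ = ⊥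

/-- Subdirectly irreducible: the congruence lattice has a monolith. -/
def IsSubdirectlyIrreducible {S : Signature} (A : SAlgebra S) : Prop :=
  ∃ μ : SCon A, μ ≠ ⊥ ∧ ∀ θ : SCon A, θ ≠ ⊥ → μ ≤ θ


section Aux

variable {S : Signature} {A : SAlgebra S}

/-- The diagonal congruence. -/
def SCon.eqCon (A : SAlgebra S) : SCon A where
  r x y := x = y
  iseqv := ⟨fun _ => rfl, Eq.symm, Eq.trans⟩
  compat o x y h := by rw [funext h]

/-- The all congruence. -/
def SCon.allCon (A : SAlgebra S) : SCon A where
  r _ _ := True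
  iseqv := ⟨fun _ => trivial, fun _ => trivial, fun _ _ => trivial⟩
  compat _ _ _ _ := trivial

theorem SCon.top_r (x y : A.carrier) : (⊤ : SCon A).r x y :=
  (le_top : SCon.allCon A ≤ ⊤) x y trivial

theorem SCon.bot_r {x y : A.carrier} : (⊥ : SCon A).r x y ↔ x = y :=
  ⟨fun h => (bot_le : (⊥ : SCon A) ≤ SCon.eqCon A) x y h,
   fun h => h ▸ (⊥ : SCon A).iseqv.refl x⟩

theorem centralizes_sInf {α β : SCon A} {s : Set (SCon A)}
    (h : ∀ δ ∈ s, Centralizes A α β δ) : Centralizes A α β (sInf s) :=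
  fun n m t a b u v ha hb hδ δ hδs => h δ hδs n m t a b u v ha hb (hδ δ hδs)

theorem commutator_centralizes (α β : SCon A) :
    Centralizes A α β (conCommutator A α β) :=
  centralizes_sInf (fun _ hδ => hδ)

theorem conCommutator_le {α β δ : SCon A} (h : Centralizes A α β δ) :
    conCommutator A α β ≤ δ :=
  sInf_le h

theorem eval_hom {B : SAlgebra S} (f : SHom A B) {n : ℕ} (t : STerm S n)
    (x : Fin n → A.carrier) :
    t.eval B (fun i => f.toFun (x i)) = f.toFun (t.eval A x) := by
  induction t with
  | var i => rfl
  | app o ts ih =>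
    show B.interp o (fun j => (ts j).eval B fun i => f.toFun (x i)) = _
    rw [STerm.eval, f.map]
    exact congrArg _ (funext fun j => ih j)

theorem append_comp {γ β : Type*} {n m : ℕ} (f : γ → β) (a : Fin n → γ) (u : Fin m → γ) :
    (fun i => f (Fin.append a u i)) = Fin.append (fun i => f (a i)) (fun j => f (u j)) := by
  funext i
  refine Fin.addCases (fun i0 => ?_) (fun j0 => ?_) i <;>
    simp [Fin.append_left, Fin.append_right]

/-- Relation generated by a set of congruences. -/
def genRel (s : Set (SCon A)) : A.carrier → A.carrier → Prop :=
  Relation.ReflTransGen (fun x y => ∃ θ ∈ s, θ.r x y)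

theorem gen_tuple_induction {s : Set (SCon A)} {n : ℕ} {P : (Fin n → A.carrier) → Prop}
    (hstep : ∀ (c : Fin n → A.carrier) (i : Fin n) (θ : SCon A), θ ∈ s → ∀ x y, θ.r x y →
      P (Function.update c i x) → P (Function.update c i y))
    (a b : Fin n → A.carrier) (h : ∀ i, genRel s (a i) (b i)) (ha : P a) : P b := by
  have upd : ∀ (c : Fin n → A.carrier) (i : Fin n) (x y : A.carrier), genRel s x y →
      P (Function.update c i x) → P (Function.update c i y) := by
    intro c i x y hxy
    induction hxy with
    | refl => exact id
    | tail _ hstep' ih =>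
      intro hp
      obtain ⟨θ, hθ, hr⟩ := hstep'
      exact hstep c i θ hθ _ _ hr (ih hp)
  have key : ∀ k : ℕ, k ≤ n → P (fun j : Fin n => if (j : ℕ) < k then b j else a j) := by
    intro k
    induction k with
    | zero =>
      intro _
      have : (fun j : Fin n => if (j : ℕ) < 0 then b j else a j) = a := by
        funext j; simp
      rw [this]; exact ha
    | succ k ih =>
      intro hk
      have hkn : k < n := hk
      have hk' : k ≤ n := le_of_lt hkn
      set i : Fin n := ⟨k, hkn⟩ with hi
      have e1 : (fun j : Fin n => if (j : ℕ) < k then b j else a j)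
          = Function.update (fun j : Fin n => if (j : ℕ) < k then b j else a j) i (a i) := by
        funext j
        rw [Function.update_apply]
        by_cases hji : j = i
        · subst hji; simp [hi]
        · simp [hji]
      have e2 : (fun j : Fin n => if (j : ℕ) < k + 1 then b j else a j)
          = Function.update (fun j : Fin n => if (j : ℕ) < k then b j else a j) i (b i) := by
        funext j
        rw [Function.update_apply]
        by_cases hji : j = i
        · subst hji; simp [hi]
        · have hjk : (j : ℕ) ≠ k := fun hh => hji (Fin.ext hh)
          have : ((j : ℕ) < k + 1) ↔ ((j : ℕ) < k) := by omega
          simp only [hji, if_false, this]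
      rw [e2]
      exact upd _ i (a i) (b i) (h i) (e1 ▸ ih hk')
  have : (fun j : Fin n => if (j : ℕ) < n then b j else a j) = b := by
    funext j; simp [j.isLt]
  exact this ▸ key n le_rfl

/-- The generated relation is a congruence. -/
def genCon (s : Set (SCon A)) : SCon A where
  r := genRel s
  iseqv := ⟨fun _ => Relation.ReflTransGen.refl,
    fun h => (@Relation.ReflTransGen.symmetric _ (fun x y => ∃ θ ∈ s, θ.r x y)
      ⟨fun _ _ ⟨θ, hθ, hr⟩ => ⟨θ, hθ, θ.iseqv.symm hr⟩⟩).symm _ _ h,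
    fun h h' => Relation.ReflTransGen.trans h h'⟩
  compat o x y hxy := by
    refine gen_tuple_induction (P := fun c => genRel s (A.interp o x) (A.interp o c))
      ?_ x y hxy Relation.ReflTransGen.refl
    intro c i θ hθ x0 y0 hr hp
    refine Relation.ReflTransGen.trans hp (Relation.ReflTransGen.single ⟨θ, hθ, ?_⟩)
    refine θ.compat o _ _ (fun j => ?_)
    by_cases hji : j = i
    · subst hji; simpa using hr
    · simp only [Function.update_apply, hji, if_false]
      exact θ.iseqv.refl _

theorem sSup_le_genCon (s : Set (SCon A)) : sSup s ≤ genCon s :=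
  sSup_le (fun θ hθ x y h => Relation.ReflTransGen.single ⟨θ, hθ, h⟩)

theorem centralizes_sSup {s : Set (SCon A)}
    (h : ∀ θ ∈ s, Centralizes A θ ⊤ ⊥) : Centralizes A (sSup s) ⊤ ⊥ := by
  intro n m t a b u v ha _ hδ
  rw [SCon.bot_r] at hδ ⊢
  refine gen_tuple_induction (s := s)
    (P := fun c => t.eval A (Fin.append c u) = t.eval A (Fin.append c v)) ?_ a b
    (fun i => sSup_le_genCon s _ _ (ha i)) hδ
  intro c i θ hθ x y hr hp
  refine SCon.bot_r.mp (h θ hθ n m t _ _ u v (fun j => ?_) (fun j => SCon.top_r _ _)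
    (SCon.bot_r.mpr hp))
  by_cases hji : j = i
  · subst hji; simpa using hr
  · simp only [Function.update_apply, hji, if_false]
    exact θ.iseqv.refl _

end Aux

/-- In a congruence modular variety satisfying (C1): if `ξ ≥ ζ_A` and `ξ/ζ_A` is central
in `Con(A/ζ_A)`, then `ξ = ζ_A`; that is, `A/ζ_A` is centerless. -/
theorem quotient_by_center_centerless {S : Signature}
    (V : SAlgebra S → Prop) (hV : IsCongruenceModularVariety V)
    (hC1 : ∀ B : SAlgebra S, V B → ∀ α β : SCon B,
      α ⊓ conCommutator B β β = conCommutator B (α ⊓ β) β)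
    (A : SAlgebra S) (hA : V A)
    (ξ : SCon A) (hle : conCenter A ≤ ξ)
    (hcentral : conCommutator (A.quot (conCenter A)) (SCon.quotCon (conCenter A) ξ hle) ⊤ = ⊥) :
    ξ = conCenter A := by
  set ζ := conCenter A with hζ
  -- Step 1: [ξ, ⊤] ≤ ζ, via the quotient hypothesis.
  have hcent_q : Centralizes (A.quot ζ) (SCon.quotCon ζ ξ hle) ⊤ ⊥ := by
    have := commutator_centralizes (A := A.quot ζ) (SCon.quotCon ζ ξ hle) ⊤
    rwa [hcentral] at this
  have step1 : conCommutator A ξ ⊤ ≤ ζ := by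
    refine conCommutator_le ?_
    intro n m t a b u v ha _ hδ
    set q := SHom.quotHom A ζ with hq
    have key := hcent_q n m t (fun i => q.toFun (a i)) (fun i => q.toFun (b i))
      (fun j => q.toFun (u j)) (fun j => q.toFun (v j))
      (fun i => ?_) (fun j => SCon.top_r _ _) ?_
    · -- extract ζ-relatedness from equality in the quotient
      rw [SCon.bot_r, ← append_comp, ← append_comp, eval_hom, eval_hom] at key
      exact @Quotient.exact _ ζ.setoid _ _ key
    · -- images of a,b are quotCon-related
      show ξ.r (Quotient.out (Quotient.mk ζ.setoid (a i))) (Quotient.out (Quotient.mk ζ.setoid (b i)))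
      refine ξ.iseqv.trans (hle _ _ (ζ.out_rel (a i))) (ξ.iseqv.trans (ha i) ?_)
      exact ξ.iseqv.symm (hle _ _ (ζ.out_rel (b i)))
    · -- hypothesis transfers to quotient
      rw [SCon.bot_r, ← append_comp, ← append_comp, eval_hom, eval_hom]
      exact Quotient.sound hδ
  -- Step 2: (C1) with β = ⊤ : [α, ⊤] = α ⊓ [⊤, ⊤]
  have c1 : ∀ α : SCon A, conCommutator A α ⊤ = α ⊓ conCommutator A ⊤ ⊤ := by
    intro α
    have := hC1 A hA α ⊤
    rw [inf_top_eq] at this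
    exact this.symm
  -- Step 3: ζ is central.
  have hζcent : conCommutator A ζ ⊤ = ⊥ := by
    refine le_bot_iff.mp (conCommutator_le ?_)
    refine centralizes_sSup (fun θ hθ => ?_)
    have := commutator_centralizes (A := A) θ ⊤
    rwa [hθ] at this
  -- Step 4: conclude [ξ, ⊤] = ⊥, so ξ ≤ ζ.
  have hxle : conCommutator A ξ ⊤ = ⊥ := by
    have h2 : ζ ⊓ conCommutator A ⊤ ⊤ = ⊥ := by rw [← c1 ζ]; exact hζcent
    have h1 : ξ ⊓ conCommutator A ⊤ ⊤ ≤ ζ ⊓ conCommutator A ⊤ ⊤ :=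
      le_inf (by rw [← c1]; exact step1) inf_le_right
    exact le_bot_iff.mp (by rw [c1]; exact h2 ▸ h1)
  exact le_antisymm (le_sSup hxle) hle
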